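/- (Identity for the reversed first-passage matrices.) Assume the environment chain is stationary with distribution π. Then for all integers 1 ≤ m ≤ n, π · ( Λ^{*n}(n−m) − Σ_{k=m}^{n} Λ^{*(n−k)}(n−k) · V(k, m) ) · e = 0; equivalently, π·Λ^{*n}(n−m)·e = Σ_{k=m}^{n} π·Λ^{*(n−k)}(n−k)·V(k,m)·e. -/

import Mathlib

open scoped BigOperators

noncomputable section

namespace CMB

/-- The weight that the compound Markov binomial model with horizon `n`, jump matrices `Λ`
and initial distribution `μ` assigns to the path `(J, C)`. -/
def pathWeight {N : ℕ} (Λ : ℕ → Matrix (Fin N) (Fin N) ℝ) (μ : Fin N → ℝ) (n : ℕ)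
    (J : Fin (n + 1) → Fin N) (C : Fin n → ℕ) : ℝ :=
  μ (J 0) * ∏ k : Fin n, Λ (C k) (J k.castSucc) (J k.succ)

/-- The probability of the event `A` in the horizon-`n` compound Markov binomial model:
the sum of the weights of the paths belonging to the event. -/
def prob {N : ℕ} (Λ : ℕ → Matrix (Fin N) (Fin N) ℝ) (μ : Fin N → ℝ) (n : ℕ)
    (A : (Fin (n + 1) → Fin N) → (Fin n → ℕ) → Prop) : ℝ :=
  ∑' p : { p : (Fin (n + 1) → Fin N) × (Fin n → ℕ) // A p.1 p.2 },
    pathWeight Λ μ n p.1.1 p.1.2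

/-- Partial sums `S_k = C_1 + ⋯ + C_k` of the claims (`C i` is claim number `i+1`). -/
def S {n : ℕ} (C : Fin n → ℕ) (k : ℕ) : ℕ :=
  ∑ j : Fin n, if (j : ℕ) < k then C j else 0

/-- Dirac initial distribution `δ_i`. -/
def delta {N : ℕ} (i : Fin N) : Fin N → ℝ := fun i' => if i' = i then 1 else 0

/-- `hitM Λ n a i j` is the probability, in the model with initial distribution `δ_i` and
initial surplus `x = 0` (so `X_k = k - S_k`), of the event `{τ_a^+ = n, J_n = j}`,
i.e. `X_k < a` for all `k < n` and `X_n ≥ a` and `J_n = j`. -/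
def hitM {N : ℕ} (Λ : ℕ → Matrix (Fin N) (Fin N) ℝ) (n a : ℕ) : Matrix (Fin N) (Fin N) ℝ :=
  fun i j => prob Λ (delta i) n fun J C =>
    (∀ k, k < n → (k : ℤ) - S C k < (a : ℤ)) ∧ (a : ℤ) ≤ (n : ℤ) - S C n ∧ J (Fin.last n) = j

/-- `conv Λ n` is the `n`-fold matrix convolution `Λ^{*n}`. -/
def conv {N : ℕ} (Λ : ℕ → Matrix (Fin N) (Fin N) ℝ) : ℕ → ℕ → Matrix (Fin N) (Fin N) ℝ
  | 0, m => if m = 0 then 1 else 0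
  | n + 1, m => ∑ k ∈ Finset.range (m + 1), conv Λ n k * Λ (m - k)

/-- Jump matrices `Λ̃(m)`, with `λ̃_{ij}(m) = (π_j/π_i)·λ_{ji}(m)`, of the time-reversed model. -/
def lamTilde {N : ℕ} (Λ : ℕ → Matrix (Fin N) (Fin N) ℝ) (π : Fin N → ℝ) :
    ℕ → Matrix (Fin N) (Fin N) ℝ := fun m i j => π j / π i * Λ m j i

/-- `V(n,a) := Δ_π⁻¹ · M̃(n,a)ᵀ · Δ_π`, where `M̃(n,a)` is the matrix of first-passage
probabilities of the time-reversed model. -/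
def Vmat {N : ℕ} (Λ : ℕ → Matrix (Fin N) (Fin N) ℝ) (π : Fin N → ℝ) (n a : ℕ) :
    Matrix (Fin N) (Fin N) ℝ := fun i j => π j / π i * hitM (lamTilde Λ π) n a j i

-- basic S lemmas
lemma S_zero {n : ℕ} (C : Fin n → ℕ) : S C 0 = 0 := by simp [S]

lemma S_cons {n : ℕ} (c : ℕ) (C : Fin n → ℕ) (t : ℕ) :
    S (Fin.cons c C) (t + 1) = c + S C t := by
  rw [S, S, Fin.sum_univ_succ]
  simp [Fin.cons_succ, Nat.succ_lt_succ_iff]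

lemma S_eq_sum {n : ℕ} (C : Fin n → ℕ) : S C n = ∑ j, C j := by
  rw [S]; exact Finset.sum_congr rfl fun j _ => by simp [j.isLt]

lemma le_S {n : ℕ} (C : Fin n → ℕ) (t : Fin n) : C t ≤ S C n := by
  rw [S_eq_sum]
  exact Finset.single_le_sum (fun _ _ => Nat.zero_le _) (Finset.mem_univ t)

-- prob as finite sum
open Classical in
lemma prob_eq_sum {N n : ℕ} (Λ : ℕ → Matrix (Fin N) (Fin N) ℝ) (μ : Fin N → ℝ)
    (A : (Fin (n + 1) → Fin N) → (Fin n → ℕ) → Prop) (T : Finset (Fin n → ℕ))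
    (hT : ∀ J C, A J C → C ∈ T) :
    prob Λ μ n A =
      ∑ J : Fin (n + 1) → Fin N, ∑ C ∈ T,
        if A J C then pathWeight Λ μ n J C else 0 := by
  classical
  rw [prob]
  have h1 : (∑' p : { p : (Fin (n + 1) → Fin N) × (Fin n → ℕ) // A p.1 p.2 },
      pathWeight Λ μ n p.1.1 p.1.2)
      = ∑' p : (Fin (n + 1) → Fin N) × (Fin n → ℕ),
          Set.indicator {p : (Fin (n + 1) → Fin N) × (Fin n → ℕ) | A p.1 p.2}
            (fun p => pathWeight Λ μ n p.1 p.2) p :=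
    by exact tsum_subtype {p : (Fin (n + 1) → Fin N) × (Fin n → ℕ) | A p.1 p.2}
         (fun p => pathWeight Λ μ n p.1 p.2)
  have h0 : ∀ p ∉ Finset.univ ×ˢ T,
      Set.indicator {p : (Fin (n + 1) → Fin N) × (Fin n → ℕ) | A p.1 p.2}
        (fun p => pathWeight Λ μ n p.1 p.2) p = 0 := by
    intro p hp
    have h2 : p.2 ∉ T := by
      simp only [Finset.mem_product, Finset.mem_univ, true_and] at hp
      exact hp
    have h3 : ¬ A p.1 p.2 := fun h => h2 (hT _ _ h)
    simp [Set.indicator_apply, h3]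
  rw [h1, tsum_eq_sum h0, Finset.sum_product]
  refine Finset.sum_congr rfl fun J _ => Finset.sum_congr rfl fun C _ => ?_
  by_cases h : A J C <;> simp [Set.indicator_apply, h]


-- empty-event probability is zero
open Classical in
lemma prob_of_empty {N n : ℕ} (Λ : ℕ → Matrix (Fin N) (Fin N) ℝ) (μ : Fin N → ℝ)
    (A : (Fin (n + 1) → Fin N) → (Fin n → ℕ) → Prop)
    (h : ∀ J C, ¬ A J C) : prob Λ μ n A = 0 := by
  rw [prob_eq_sum Λ μ A ∅ (fun J C hJC => absurd hJC (h J C))]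
  simp

lemma hitM_of_lt {N : ℕ} (Λ' : ℕ → Matrix (Fin N) (Fin N) ℝ) {k a : ℕ} (h : k < a) :
    hitM Λ' k a = 0 := by
  funext i j
  show prob _ _ _ _ = 0
  apply prob_of_empty
  rintro J C ⟨-, h2, -⟩
  have : (0:ℤ) ≤ (S C k : ℤ) := Int.natCast_nonneg _
  omega

lemma hitM_succ_zero {N : ℕ} (Λ' : ℕ → Matrix (Fin N) (Fin N) ℝ) (k : ℕ) :
    hitM Λ' (k + 1) 0 = 0 := by
  funext i j
  show prob _ _ _ _ = 0
  apply prob_of_empty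
  rintro J C ⟨h1, -, -⟩
  have := h1 0 (Nat.succ_pos k)
  rw [S_zero] at this
  omega

open Classical in
lemma hitM_zero_zero {N : ℕ} (Λ' : ℕ → Matrix (Fin N) (Fin N) ℝ) :
    hitM Λ' 0 0 = 1 := by
  funext i j
  show prob _ _ _ _ = (1 : Matrix (Fin N) (Fin N) ℝ) i j
  rw [prob_eq_sum _ _ _ {fun x : Fin 0 => x.elim0}
    (fun J C _ => by
      have : C = fun x : Fin 0 => x.elim0 := funext fun x => x.elim0
      simp [this])]
  simp only [Finset.sum_singleton]
  rw [show (1 : Matrix (Fin N) (Fin N) ℝ) i j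
      = ∑ y : Fin N, if y = j then delta i y else 0 by
    simp [delta, Matrix.one_apply]
    by_cases h : i = j <;> simp [h, eq_comm]]
  apply Fintype.sum_equiv (Equiv.funUnique (Fin 1) (Fin N))
  intro J
  by_cases h : J 0 = j <;>
    simp [pathWeight, h, S_zero, Fin.last, Equiv.funUnique,
      show (default : Fin 1) = 0 from rfl]

open Classical in
lemma sum_piFinset_cons {M : Type*} [AddCommMonoid M] {n : ℕ} (s : Finset ℕ)
    (g : (Fin (n + 1) → ℕ) → M) :
    ∑ C ∈ Fintype.piFinset (fun _ : Fin (n + 1) => s), g C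
      = ∑ c ∈ s, ∑ C' ∈ Fintype.piFinset (fun _ : Fin n => s), g (Fin.cons c C') := by
  rw [← Finset.sum_product']
  refine Finset.sum_nbij' (fun C => ((C 0, Fin.tail C) : ℕ × (Fin n → ℕ)))
    (fun p => Fin.cons p.1 p.2) ?_ ?_ ?_ ?_ ?_
  · intro C hC
    rw [Fintype.mem_piFinset] at hC
    rw [Finset.mem_product]
    exact ⟨hC 0, Fintype.mem_piFinset.2 fun t => hC t.succ⟩
  · intro p hp
    rw [Finset.mem_product] at hp
    rw [Fintype.mem_piFinset]
    intro t
    refine Fin.cases ?_ ?_ t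
    · simpa using hp.1
    · intro t'
      simpa using Fintype.mem_piFinset.1 hp.2 t'
  · intro C _
    exact Fin.cons_self_tail C
  · intro p _
    simp [Fin.tail_cons]
  · intro C _
    rw [Fin.cons_self_tail]

lemma sum_fun_cons {α : Type*} {M : Type*} [Fintype α] [DecidableEq α] [AddCommMonoid M]
    {n : ℕ} (g : (Fin (n + 1) → α) → M) :
    ∑ J : Fin (n + 1) → α, g J = ∑ x : α, ∑ J' : Fin n → α, g (Fin.cons x J') := by
  have h1 : ∑ p : α × (Fin n → α), g (Fin.cons p.1 p.2) = ∑ J, g J := by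
    exact Equiv.sum_comp (Fin.consEquiv (fun _ : Fin (n + 1) => α)) g
  rw [← h1, Fintype.sum_prod_type]

lemma pathWeight_cons {N : ℕ} (Λ' : ℕ → Matrix (Fin N) (Fin N) ℝ) (μ : Fin N → ℝ)
    {k : ℕ} (x : Fin N) (J' : Fin (k + 1) → Fin N) (c : ℕ) (C' : Fin k → ℕ) :
    pathWeight Λ' μ (k + 1) (Fin.cons x J') (Fin.cons c C')
      = μ x * (Λ' c x (J' 0) *
          ∏ t : Fin k, Λ' (C' t) (J' t.castSucc) (J' t.succ)) := by
  simp [pathWeight, Fin.prod_univ_succ, Fin.cons_succ, ← Fin.succ_castSucc, mul_assoc]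

/-- The first-passage event. -/
def Ev {N : ℕ} (n a : ℕ) (j : Fin N) (J : Fin (n + 1) → Fin N) (C : Fin n → ℕ) : Prop :=
  (∀ k, k < n → (k : ℤ) - S C k < (a : ℤ)) ∧ (a : ℤ) ≤ (n : ℤ) - S C n ∧ J (Fin.last n) = j

lemma hitM_eq_prob {N : ℕ} (Λ' : ℕ → Matrix (Fin N) (Fin N) ℝ) (n a : ℕ) (i j : Fin N) :
    hitM Λ' n a i j = prob Λ' (delta i) n (Ev n a j) := rfl

lemma Ev_mem_piFinset {N n' a' R : ℕ} {j : Fin N} (hR : n' + 1 ≤ R)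
    (J : Fin (n' + 1) → Fin N) (C : Fin n' → ℕ) (h : Ev n' a' j J C) :
    C ∈ Fintype.piFinset (fun _ : Fin n' => Finset.range R) := by
  rw [Fintype.mem_piFinset]
  intro t
  rw [Finset.mem_range]
  obtain ⟨-, h2, -⟩ := h
  have h3 : C t ≤ S C n' := le_S C t
  omega

lemma event_cons_iff {N k a : ℕ} (j x : Fin N) (J' : Fin (k + 1) → Fin N)
    (c : ℕ) (C' : Fin k → ℕ) :
    Ev (k + 1) (a + 1) j (Fin.cons x J') (Fin.cons c C') ↔ Ev k (a + c) j J' C' := by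
  have hlast : (Fin.cons x J' : Fin (k + 1 + 1) → Fin N) (Fin.last (k + 1))
      = J' (Fin.last k) := by
    rw [← Fin.succ_last, Fin.cons_succ]
  have hS : ∀ t, S (Fin.cons c C') (t + 1) = c + S C' t := S_cons c C'
  constructor
  · rintro ⟨h1, h2, h3⟩
    refine ⟨fun t ht => ?_, ?_, by rw [← hlast]; exact h3⟩
    · have := h1 (t + 1) (by omega)
      rw [hS] at this
      push_cast at this ⊢
      omega
    · rw [hS] at h2
      push_cast at h2 ⊢
      omega
  · rintro ⟨h1, h2, h3⟩
    refine ⟨fun t ht => ?_, ?_, by rw [hlast]; exact h3⟩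
    · cases t with
      | zero => rw [S_zero]; push_cast; omega
      | succ t' =>
        have := h1 t' (by omega)
        rw [hS]
        push_cast at this ⊢
        omega
    · rw [hS]
      push_cast at h2 ⊢
      omega

lemma sum_delta_mul {N : ℕ} (i : Fin N) (g : Fin N → ℝ) :
    ∑ x, delta i x * g x = g i := by
  simp [delta, ite_mul, Finset.sum_ite_eq']

open Classical in
lemma hitM_succ {N : ℕ} (Λ' : ℕ → Matrix (Fin N) (Fin N) ℝ) (k a : ℕ) :
    hitM Λ' (k + 1) (a + 1)
      = ∑ c ∈ Finset.range (k + 2), Λ' c * hitM Λ' k (a + c) := by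
  funext i j
  rw [Matrix.sum_apply]
  have eL : hitM Λ' (k + 1) (a + 1) i j
      = ∑ J : Fin (k + 1 + 1) → Fin N,
          ∑ C ∈ Fintype.piFinset (fun _ : Fin (k + 1) => Finset.range (k + 2)),
            (if Ev (k + 1) (a + 1) j J C then pathWeight Λ' (delta i) (k + 1) J C else 0) := by
    rw [hitM_eq_prob]
    exact prob_eq_sum _ _ _ _ (fun J C h => Ev_mem_piFinset (by omega) J C h)
  have eR : ∀ (c : ℕ) (l : Fin N), hitM Λ' k (a + c) l j
      = ∑ J' : Fin (k + 1) → Fin N,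
          ∑ C' ∈ Fintype.piFinset (fun _ : Fin k => Finset.range (k + 2)),
            (if Ev k (a + c) j J' C' then pathWeight Λ' (delta l) k J' C' else 0) := by
    intro c l
    rw [hitM_eq_prob]
    exact prob_eq_sum _ _ _ _ (fun J C h => Ev_mem_piFinset (by omega) J C h)
  rw [eL, sum_fun_cons]
  have key : ∀ x : Fin N,
      (∑ J' : Fin (k + 1) → Fin N,
        ∑ C ∈ Fintype.piFinset (fun _ : Fin (k + 1) => Finset.range (k + 2)),
          (if Ev (k + 1) (a + 1) j (Fin.cons x J') C then
            pathWeight Λ' (delta i) (k + 1) (Fin.cons x J') C else 0))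
      = delta i x * ∑ c ∈ Finset.range (k + 2),
          ∑ J' : Fin (k + 1) → Fin N,
            ∑ C' ∈ Fintype.piFinset (fun _ : Fin k => Finset.range (k + 2)),
              (if Ev k (a + c) j J' C' then
                Λ' c x (J' 0) * ∏ t : Fin k, Λ' (C' t) (J' t.castSucc) (J' t.succ)
              else 0) := by
    intro x
    have h1 : ∀ J' : Fin (k + 1) → Fin N,
        (∑ C ∈ Fintype.piFinset (fun _ : Fin (k + 1) => Finset.range (k + 2)),
          (if Ev (k + 1) (a + 1) j (Fin.cons x J') C then
            pathWeight Λ' (delta i) (k + 1) (Fin.cons x J') C else 0))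
        = ∑ c ∈ Finset.range (k + 2),
            ∑ C' ∈ Fintype.piFinset (fun _ : Fin k => Finset.range (k + 2)),
              (if Ev k (a + c) j J' C' then
                delta i x * (Λ' c x (J' 0)
                  * ∏ t : Fin k, Λ' (C' t) (J' t.castSucc) (J' t.succ))
              else 0) := by
      intro J'
      rw [sum_piFinset_cons]
      refine Finset.sum_congr rfl fun c _ => Finset.sum_congr rfl fun C' _ => ?_
      rw [if_congr (event_cons_iff j x J' c C') (pathWeight_cons Λ' (delta i) x J' c C') rfl]
    simp only [h1]
    rw [Finset.sum_comm, Finset.mul_sum]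
    refine Finset.sum_congr rfl fun c _ => ?_
    rw [Finset.mul_sum]
    refine Finset.sum_congr rfl fun J' _ => ?_
    rw [Finset.mul_sum]
    refine Finset.sum_congr rfl fun C' _ => ?_
    split_ifs <;> simp
  simp only [key]
  rw [sum_delta_mul]
  refine Finset.sum_congr rfl fun c _ => ?_
  rw [Matrix.mul_apply]
  have inner : ∀ (J' : Fin (k + 1) → Fin N) (C' : Fin k → ℕ),
      (∑ l, Λ' c i l * (if Ev k (a + c) j J' C' then pathWeight Λ' (delta l) k J' C' else 0))
      = (if Ev k (a + c) j J' C' then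
          Λ' c i (J' 0) * ∏ t : Fin k, Λ' (C' t) (J' t.castSucc) (J' t.succ)
        else 0) := by
    intro J' C'
    by_cases h : Ev k (a + c) j J' C'
    · simp only [h, if_true, pathWeight]
      simp [delta, mul_ite, ite_mul, mul_assoc, Finset.sum_ite_eq]
    · simp [h]
  have rhs1 : ∑ l, Λ' c i l * hitM Λ' k (a + c) l j
      = ∑ J' : Fin (k + 1) → Fin N,
          ∑ C' ∈ Fintype.piFinset (fun _ : Fin k => Finset.range (k + 2)),
            ∑ l, Λ' c i l *
              (if Ev k (a + c) j J' C' then pathWeight Λ' (delta l) k J' C' else 0) := by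
    simp only [eR, Finset.mul_sum]
    rw [Finset.sum_comm]
    exact Finset.sum_congr rfl fun J' _ => Finset.sum_comm
  rw [rhs1]
  exact Finset.sum_congr rfl fun J' _ => Finset.sum_congr rfl fun C' _ => (inner J' C').symm

lemma tri {M : Type*} [AddCommMonoid M] (m : ℕ) (F : ℕ → ℕ → M) :
    ∑ k ∈ Finset.range (m + 1), ∑ l ∈ Finset.range (k + 1), F k l
      = ∑ l ∈ Finset.range (m + 1), ∑ d ∈ Finset.range (m - l + 1), F (l + d) l := by
  induction m with
  | zero => simp
  | succ m ih =>
    rw [Finset.sum_range_succ _ (m + 1), ih]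
    conv_rhs => rw [Finset.sum_range_succ _ (m + 1)]
    have h1 : ∀ l ∈ Finset.range (m + 1),
        (∑ d ∈ Finset.range (m + 1 - l + 1), F (l + d) l)
          = (∑ d ∈ Finset.range (m - l + 1), F (l + d) l) + F (m + 1) l := by
      intro l hl
      rw [Finset.mem_range] at hl
      rw [show m + 1 - l + 1 = (m - l + 1) + 1 by omega, Finset.sum_range_succ]
      congr 2
      omega
    rw [Finset.sum_congr rfl h1, Finset.sum_add_distrib,
      show m + 1 - (m + 1) + 1 = 1 by omega, Finset.sum_range_one,
      show m + 1 + 0 = m + 1 by omega,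
      Finset.sum_range_succ _ (m + 1), ← add_assoc]

lemma conv_succ_left {N : ℕ} (Λ' : ℕ → Matrix (Fin N) (Fin N) ℝ) (n c : ℕ) :
    conv Λ' (n + 1) c = ∑ d ∈ Finset.range (c + 1), Λ' d * conv Λ' n (c - d) := by
  induction n generalizing c with
  | zero =>
    rw [show conv Λ' (0 + 1) c
        = ∑ k ∈ Finset.range (c + 1), conv Λ' 0 k * Λ' (c - k) from rfl]
    rw [Finset.sum_eq_single_of_mem 0 (Finset.mem_range.2 (by omega))
      (fun k _ hk => by
        rw [show conv Λ' 0 k = if k = 0 then 1 else 0 from rfl, if_neg hk, Matrix.zero_mul])]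
    rw [Finset.sum_eq_single_of_mem c (Finset.mem_range.2 (by omega))
      (fun d hd hdc => by
        rw [show conv Λ' 0 (c - d) = if c - d = 0 then 1 else 0 from rfl, if_neg
          (by rw [Finset.mem_range] at hd; omega), Matrix.mul_zero])]
    rw [show conv Λ' 0 0 = (1 : Matrix (Fin N) (Fin N) ℝ) from rfl,
      Nat.sub_zero, Nat.sub_self,
      show conv Λ' 0 0 = (1 : Matrix (Fin N) (Fin N) ℝ) from rfl,
      Matrix.one_mul, Matrix.mul_one]
  | succ n ih =>
    have step1 : conv Λ' (n + 1 + 1) c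
        = ∑ k ∈ Finset.range (c + 1),
            (∑ d ∈ Finset.range (k + 1), Λ' d * conv Λ' n (k - d)) * Λ' (c - k) := by
      rw [show conv Λ' (n + 1 + 1) c
          = ∑ k ∈ Finset.range (c + 1), conv Λ' (n + 1) k * Λ' (c - k) from rfl]
      exact Finset.sum_congr rfl fun k _ => by rw [ih]
    rw [step1]
    simp only [Finset.sum_mul]
    rw [tri c (fun k d => Λ' d * conv Λ' n (k - d) * Λ' (c - k))]
    refine Finset.sum_congr rfl fun d hd => ?_
    rw [show conv Λ' (n + 1) (c - d)
        = ∑ e ∈ Finset.range (c - d + 1), conv Λ' n e * Λ' (c - d - e) from rfl,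
      Finset.mul_sum]
    refine Finset.sum_congr rfl fun e he => ?_
    rw [show d + e - d = e by omega, show c - (d + e) = c - d - e by omega, mul_assoc]

lemma star_aux {N : ℕ} (Λ' : ℕ → Matrix (Fin N) (Fin N) ℝ) :
    ∀ n m : ℕ, m ≤ n →
      conv Λ' n (n - m)
        = ∑ k ∈ Finset.Icc m n, hitM Λ' k m * conv Λ' (n - k) (n - k) := by
  intro n
  induction n with
  | zero =>
    intro m hm
    interval_cases m
    simp [hitM_zero_zero]
  | succ n ih =>
    intro m hm
    match m with
    | 0 =>
      have hIcc : Finset.Icc 0 (n + 1) = Finset.range (n + 2) := by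
        ext x; simp [Nat.lt_succ_iff]
      rw [hIcc, Finset.sum_range_succ']
      have hz : ∀ k ∈ Finset.range (n + 1),
          hitM Λ' (k + 1) 0 * conv Λ' (n + 1 - (k + 1)) (n + 1 - (k + 1)) = 0 := by
        intro k _
        rw [hitM_succ_zero, Matrix.zero_mul]
      rw [Finset.sum_congr rfl hz, Finset.sum_const, smul_zero, zero_add,
        hitM_zero_zero, Matrix.one_mul]
      simp
    | m' + 1 =>
      have hm' : m' ≤ n := by omega
      -- normal form
      have norm :
          ∑ c ∈ Finset.range (n + 2), ∑ k ∈ Finset.Icc m' n,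
            Λ' c * (hitM Λ' k (m' + c) * conv Λ' (n - k) (n - k))
          = ∑ c ∈ Finset.range (n + 2), ∑ k ∈ Finset.Icc m' n,
            Λ' c * (hitM Λ' k (m' + c) * conv Λ' (n - k) (n - k)) := rfl
      -- LHS transformation
      have hL : conv Λ' (n + 1) (n + 1 - (m' + 1))
          = ∑ c ∈ Finset.range (n + 2), ∑ k ∈ Finset.Icc m' n,
              Λ' c * (hitM Λ' k (m' + c) * conv Λ' (n - k) (n - k)) := by
        rw [show n + 1 - (m' + 1) = n - m' by omega, conv_succ_left]
        have e1 : ∀ c ∈ Finset.range (n - m' + 1),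
            Λ' c * conv Λ' n (n - m' - c)
              = ∑ k ∈ Finset.Icc m' n,
                  Λ' c * (hitM Λ' k (m' + c) * conv Λ' (n - k) (n - k)) := by
          intro c hc
          rw [Finset.mem_range] at hc
          rw [show n - m' - c = n - (m' + c) by omega, ih (m' + c) (by omega),
            Finset.mul_sum]
          rw [← Finset.sum_subset (Finset.Icc_subset_Icc_left (by omega : m' ≤ m' + c))
            (fun k hk hk2 => ?_)]
          rw [hitM_of_lt Λ' (by
            rw [Finset.mem_Icc] at hk
            rw [Finset.mem_Icc] at hk2
            omega), Matrix.zero_mul, Matrix.mul_zero]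
        rw [Finset.sum_congr rfl e1]
        refine Finset.sum_subset (fun c hc => Finset.mem_range.2 (by
          rw [Finset.mem_range] at hc; omega)) (fun c hc hc2 => ?_)
        rw [Finset.mem_range] at hc hc2
        refine Finset.sum_eq_zero fun k hk => ?_
        rw [Finset.mem_Icc] at hk
        rw [hitM_of_lt Λ' (by omega), Matrix.zero_mul, Matrix.mul_zero]
      -- RHS transformation
      have hR : ∑ k ∈ Finset.Icc (m' + 1) (n + 1),
            hitM Λ' k (m' + 1) * conv Λ' (n + 1 - k) (n + 1 - k)
          = ∑ c ∈ Finset.range (n + 2), ∑ k ∈ Finset.Icc m' n,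
              Λ' c * (hitM Λ' k (m' + c) * conv Λ' (n - k) (n - k)) := by
        have him : Finset.Icc (m' + 1) (n + 1) = (Finset.Icc m' n).image (· + 1) := by
          ext x
          simp only [Finset.mem_Icc, Finset.mem_image]
          constructor
          · intro hx; exact ⟨x - 1, by omega, by omega⟩
          · rintro ⟨y, hy, rfl⟩; omega
        rw [him, Finset.sum_image (by intro a _ b _ h; simp only at h; omega)]
        have e1 : ∀ k ∈ Finset.Icc m' n,
            hitM Λ' (k + 1) (m' + 1) * conv Λ' (n + 1 - (k + 1)) (n + 1 - (k + 1))
              = ∑ c ∈ Finset.range (n + 2),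
                  Λ' c * (hitM Λ' k (m' + c) * conv Λ' (n - k) (n - k)) := by
          intro k hk
          rw [Finset.mem_Icc] at hk
          rw [show n + 1 - (k + 1) = n - k by omega, hitM_succ, Finset.sum_mul]
          have e2 : ∀ c ∈ Finset.range (k + 2),
              Λ' c * hitM Λ' k (m' + c) * conv Λ' (n - k) (n - k)
                = Λ' c * (hitM Λ' k (m' + c) * conv Λ' (n - k) (n - k)) :=
            fun c _ => mul_assoc _ _ _
          rw [Finset.sum_congr rfl e2]
          refine Finset.sum_subset (fun c hc => Finset.mem_range.2 (by
            rw [Finset.mem_range] at hc; omega)) (fun c hc hc2 => ?_)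
          rw [Finset.mem_range] at hc hc2
          rw [hitM_of_lt Λ' (by omega), Matrix.zero_mul, Matrix.mul_zero]
        rw [Finset.sum_congr rfl e1, Finset.sum_comm]
      rw [hL, hR]

lemma conv_lamTilde {N : ℕ} (Λ : ℕ → Matrix (Fin N) (Fin N) ℝ) (π : Fin N → ℝ)
    (hπ : ∀ i, π i ≠ 0) :
    ∀ r c (i j : Fin N), conv (lamTilde Λ π) r c i j = π j / π i * conv Λ r c j i := by
  intro r
  induction r with
  | zero =>
    intro c i j
    by_cases hc : c = 0
    · subst hc
      rw [show conv (lamTilde Λ π) 0 0 = (1 : Matrix (Fin N) (Fin N) ℝ) from rfl,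
        show conv Λ 0 0 = (1 : Matrix (Fin N) (Fin N) ℝ) from rfl]
      by_cases hij : i = j
      · subst hij; simp [Matrix.one_apply_eq, div_self (hπ i)]
      · rw [Matrix.one_apply_ne hij, Matrix.one_apply_ne (Ne.symm hij), mul_zero]
    · rw [show conv (lamTilde Λ π) 0 c = ((if c = 0 then 1 else 0) :
          Matrix (Fin N) (Fin N) ℝ) from rfl,
        show conv Λ 0 c = ((if c = 0 then 1 else 0) : Matrix (Fin N) (Fin N) ℝ) from rfl,
        if_neg hc]
      simp [Matrix.zero_apply]
  | succ r ih =>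
    intro c i j
    rw [show conv (lamTilde Λ π) (r + 1) c
        = ∑ k ∈ Finset.range (c + 1), conv (lamTilde Λ π) r k * lamTilde Λ π (c - k)
          from rfl, conv_succ_left, Matrix.sum_apply, Matrix.sum_apply, Finset.mul_sum]
    rw [← Finset.sum_range_reflect (fun d => (π j / π i) * ((Λ d * conv Λ r (c - d)) j i))
      (c + 1)]
    refine Finset.sum_congr rfl fun k hk => ?_
    rw [Finset.mem_range] at hk
    rw [show c + 1 - 1 - k = c - k by omega]
    rw [Matrix.mul_apply, Matrix.mul_apply, Finset.mul_sum]
    refine Finset.sum_congr rfl fun l _ => ?_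
    rw [ih, lamTilde, show c - (c - k) = k by omega]
    field_simp [hπ l, hπ i]

lemma triple_collapse {N : ℕ} (π : Fin N → ℝ) (A B : Matrix (Fin N) (Fin N) ℝ) :
    ∑ i, ∑ j, π i * (A * B) i j = ∑ l, (∑ x, π x * A x l) * (∑ y, B l y) := by
  have e1 : ∀ i j, π i * (A * B) i j = ∑ l, π i * (A i l * B l j) := fun i j => by
    rw [Matrix.mul_apply, Finset.mul_sum]
  calc ∑ i, ∑ j, π i * (A * B) i j
      = ∑ i, ∑ j, ∑ l, π i * (A i l * B l j) :=
        Finset.sum_congr rfl fun i _ => Finset.sum_congr rfl fun j _ => e1 i j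
    _ = ∑ i, ∑ l, ∑ j, π i * (A i l * B l j) :=
        Finset.sum_congr rfl fun i _ => Finset.sum_comm
    _ = ∑ l, ∑ i, ∑ j, π i * (A i l * B l j) := Finset.sum_comm
    _ = ∑ l, (∑ x, π x * A x l) * (∑ y, B l y) := by
        refine Finset.sum_congr rfl fun l _ => ?_
        rw [Finset.sum_mul_sum]
        refine Finset.sum_congr rfl fun x _ => Finset.sum_congr rfl fun y _ => ?_
        ring


/-- Identity for the reversed first-passage matrices.  Assume the
environment chain stationary with distribution `π`.  For `1 ≤ m ≤ n`,
`π·(Λ^{*n}(n−m) − Σ_{k=m}^{n} Λ^{*(n−k)}(n−k)·V(k,m))·e = 0`. -/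
theorem reversed_first_passage_identity
    {N : ℕ} (hN : 1 ≤ N)
    (Λ : ℕ → Matrix (Fin N) (Fin N) ℝ) (P : Matrix (Fin N) (Fin N) ℝ)
    (hΛ : ∀ m i j, 0 ≤ Λ m i j)
    (hP : ∀ i j, HasSum (fun m => Λ m i j) (P i j))
    (hPstoch : ∀ i, ∑ j, P i j = 1)
    (π : Fin N → ℝ) (hπpos : ∀ i, 0 < π i) (hπsum : ∑ i, π i = 1)
    (hπP : ∀ j, ∑ i, π i * P i j = π j)
    (m n : ℕ) (hm : 1 ≤ m) (hmn : m ≤ n) :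
    ∑ i, ∑ j, π i *
      (conv Λ n (n - m) -
        ∑ k ∈ Finset.Icc m n, conv Λ (n - k) (n - k) * Vmat Λ π k m) i j = 0 := by
  classical
  have hπ : ∀ i, π i ≠ 0 := fun i => (hπpos i).ne'
  set L := lamTilde Λ π with hLdef
  have hsub : ∀ i j : Fin N,
      π i * (conv Λ n (n - m)
          - ∑ k ∈ Finset.Icc m n, conv Λ (n - k) (n - k) * Vmat Λ π k m) i j
        = π i * conv Λ n (n - m) i j
          - π i * (∑ k ∈ Finset.Icc m n, conv Λ (n - k) (n - k) * Vmat Λ π k m) i j := by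
    intro i j
    rw [Matrix.sub_apply, mul_sub]
  simp only [hsub, Finset.sum_sub_distrib]
  rw [sub_eq_zero]
  have key1 : ∑ i, ∑ j, π i * conv Λ n (n - m) i j
      = ∑ i, ∑ j, π i * conv L n (n - m) i j := by
    have e : ∀ i j : Fin N, π i * conv L n (n - m) i j = π j * conv Λ n (n - m) j i := by
      intro i j
      rw [hLdef, conv_lamTilde Λ π hπ]
      field_simp
      rw [mul_assoc]; exact mul_div_cancel_left₀ _ (hπ i)
    rw [show (∑ i, ∑ j, π i * conv L n (n - m) i j)
        = ∑ i, ∑ j, π j * conv Λ n (n - m) j i from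
      Finset.sum_congr rfl fun i _ => Finset.sum_congr rfl fun j _ => e i j]
    exact Finset.sum_comm
  rw [key1, star_aux L n m hmn]
  simp only [Matrix.sum_apply, Finset.mul_sum]
  have swap : ∀ x : ℕ → Fin N → Fin N → ℝ,
      (∑ i, ∑ j, ∑ k ∈ Finset.Icc m n, x k i j)
        = ∑ k ∈ Finset.Icc m n, ∑ i, ∑ j, x k i j := by
    intro x
    calc ∑ i, ∑ j, ∑ k ∈ Finset.Icc m n, x k i j
        = ∑ i, ∑ k ∈ Finset.Icc m n, ∑ j, x k i j :=
          Finset.sum_congr rfl fun i _ => Finset.sum_comm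
      _ = ∑ k ∈ Finset.Icc m n, ∑ i, ∑ j, x k i j := Finset.sum_comm
  rw [swap, swap]
  refine Finset.sum_congr rfl fun k hk => ?_
  rw [triple_collapse]
  symm
  have e2 : ∀ i j : Fin N, π i * (conv Λ (n - k) (n - k) * Vmat Λ π k m) i j
      = ∑ l, π i * (conv Λ (n - k) (n - k) i l
          * (π j / π l * hitM (lamTilde Λ π) k m j l)) := fun i j => by
    rw [Matrix.mul_apply, Finset.mul_sum]
    rfl
  calc ∑ i, ∑ j, π i * (conv Λ (n - k) (n - k) * Vmat Λ π k m) i j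
      = ∑ i, ∑ j, ∑ l, π i * (conv Λ (n - k) (n - k) i l
          * (π j / π l * hitM (lamTilde Λ π) k m j l)) :=
        Finset.sum_congr rfl fun i _ => Finset.sum_congr rfl fun j _ => e2 i j
    _ = ∑ i, ∑ l, ∑ j, π i * (conv Λ (n - k) (n - k) i l
          * (π j / π l * hitM (lamTilde Λ π) k m j l)) :=
        Finset.sum_congr rfl fun i _ => Finset.sum_comm
    _ = ∑ l, ∑ i, ∑ j, π i * (conv Λ (n - k) (n - k) i l
          * (π j / π l * hitM (lamTilde Λ π) k m j l)) := Finset.sum_comm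
    _ = ∑ l, (∑ x, π x * hitM L k m x l) * (∑ y, conv L (n - k) (n - k) l y) := by
        refine Finset.sum_congr rfl fun l _ => ?_
        rw [Finset.sum_mul_sum]
        conv_lhs => rw [Finset.sum_comm]
        refine Finset.sum_congr rfl fun x _ => Finset.sum_congr rfl fun y _ => ?_
        rw [hLdef, conv_lamTilde Λ π hπ (n - k) (n - k) l y]
        field_simp

end CMB
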